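/- If f : [0,∞) → (0,∞) is a decreasing function with lim_{t→∞} f(t) = 0 and Φ satisfies ‖Φ(t+t₀,t₀,x)v‖ ≥ f(t)‖v‖ for all t,t₀ ≥ 0 and all (x,v), then there exist constants Ñ > 1 and ω > 0 such that Ñ‖Φ(t+t₀,t₀,x)v‖ ≥ e^{-ωt}‖v‖ for all t,t₀ ≥ 0 and all (x,v). -/

import Mathlib

open MeasureTheory Real Filter intervalIntegral

theorem stmt0 {X V : Type*} [MetricSpace X] [NormedAddCommGroup V] [NormedSpace ℝ V]
    (φ : ℝ → ℝ → X → X) (Φ : ℝ → ℝ → X → V →L[ℝ] V)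
    (hφ1 : ∀ t, 0 ≤ t → ∀ x, φ t t x = x)
    (hφ2 : ∀ t s t₀ x, 0 ≤ t₀ → t₀ ≤ s → s ≤ t → φ t s (φ s t₀ x) = φ t t₀ x)
    (hΦ1 : ∀ t, 0 ≤ t → ∀ x, Φ t t x = ContinuousLinearMap.id ℝ V)
    (hΦ2 : ∀ t s t₀ x, 0 ≤ t₀ → t₀ ≤ s → s ≤ t → Φ t t₀ x = (Φ t s (φ s t₀ x)).comp (Φ s t₀ x))
    (f : ℝ → ℝ) (hfpos : ∀ t, 0 ≤ t → 0 < f t)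
    (hfdec : ∀ s t, 0 ≤ s → s ≤ t → f t ≤ f s)
    (hflim : Tendsto f atTop (nhds 0))
    (hdecay : ∀ t, 0 ≤ t → ∀ t₀, 0 ≤ t₀ → ∀ x (v : V), f t * ‖v‖ ≤ ‖Φ (t + t₀) t₀ x v‖) :
    ∃ N ω : ℝ, 1 < N ∧ 0 < ω ∧ ∀ t, 0 ≤ t → ∀ t₀, 0 ≤ t₀ → ∀ x (v : V),
      Real.exp (-ω * t) * ‖v‖ ≤ N * ‖Φ (t + t₀) t₀ x v‖ := by
  set c : ℝ := min (f 1) (1/2) with hc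
  have hc0 : 0 < c := lt_min (hfpos 1 one_pos.le) (by norm_num)
  have hchalf : c ≤ 1/2 := min_le_right _ _
  have hc1 : c < 1 := lt_of_le_of_lt hchalf (by norm_num)
  -- key lemma
  have key : ∀ n : ℕ, ∀ t : ℝ, (n : ℝ) ≤ t → t ≤ (n : ℝ) + 1 →
      ∀ t₀, 0 ≤ t₀ → ∀ x (v : V), c ^ (n + 1) * ‖v‖ ≤ ‖Φ (t + t₀) t₀ x v‖ := by
    intro n
    induction n with
    | zero =>
      intro t ht0 ht1 t₀ ht₀ x v
      simp only [Nat.cast_zero, zero_add] at ht0 ht1 ⊢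
      calc c ^ 1 * ‖v‖ ≤ f t * ‖v‖ := by
            apply mul_le_mul_of_nonneg_right _ (norm_nonneg v)
            calc c ^ 1 = c := pow_one c
              _ ≤ f 1 := min_le_left _ _
              _ ≤ f t := hfdec t 1 ht0 ht1
        _ ≤ ‖Φ (t + t₀) t₀ x v‖ := hdecay t ht0 t₀ ht₀ x v
    | succ n ih =>
      intro t ht0 ht1 t₀ ht₀ x v
      have h1t : (1 : ℝ) ≤ t := by
        push_cast at ht0
        linarith [Nat.cast_nonneg (α := ℝ) n]
      have hs0 : 0 ≤ t - 1 + t₀ := by linarith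
      have hcomp := hΦ2 (t + t₀) (t - 1 + t₀) t₀ x ht₀ (by linarith) (by linarith)
      set x' := φ (t - 1 + t₀) t₀ x
      set w := Φ (t - 1 + t₀) t₀ x v with hw
      have hΦv : Φ (t + t₀) t₀ x v = Φ (t + t₀) (t - 1 + t₀) x' w := by
        rw [hcomp]; rfl
      have hstep : f 1 * ‖w‖ ≤ ‖Φ (t + t₀) (t - 1 + t₀) x' w‖ := by
        have := hdecay 1 one_pos.le (t - 1 + t₀) hs0 x' w
        have he : (1 : ℝ) + (t - 1 + t₀) = t + t₀ := by ring
        rwa [he] at this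
      have hih : c ^ (n + 1) * ‖v‖ ≤ ‖w‖ := by
        have := ih (t - 1) (by push_cast at ht0 ⊢; linarith) (by push_cast at ht1 ⊢; linarith)
          t₀ ht₀ x v
        have he : t - 1 + t₀ = t - 1 + t₀ := rfl
        exact this
      calc c ^ (n + 1 + 1) * ‖v‖ = c * (c ^ (n + 1) * ‖v‖) := by ring
        _ ≤ c * ‖w‖ := by
            apply mul_le_mul_of_nonneg_left hih hc0.le
        _ ≤ f 1 * ‖w‖ := by
            apply mul_le_mul_of_nonneg_right (min_le_left _ _) (norm_nonneg w)
        _ ≤ ‖Φ (t + t₀) (t - 1 + t₀) x' w‖ := hstep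
        _ = ‖Φ (t + t₀) t₀ x v‖ := by rw [hΦv]
  refine ⟨1 / c, -Real.log c, ?_, ?_, ?_⟩
  · rw [lt_div_iff₀ hc0]; linarith
  · have := Real.log_neg hc0 hc1
    linarith
  · intro t ht t₀ ht₀ x v
    set n := ⌊t⌋₊ with hn
    have hnt : (n : ℝ) ≤ t := Nat.floor_le ht
    have htn : t ≤ (n : ℝ) + 1 := (Nat.lt_floor_add_one t).le
    have hkey := key n t hnt htn t₀ ht₀ x v
    have hexp : Real.exp (-(-Real.log c) * t) = c ^ t := by
      rw [neg_neg, Real.rpow_def_of_pos hc0, mul_comm]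
    rw [hexp]
    have h1 : c ^ t ≤ c ^ (n : ℝ) := by
      exact Real.rpow_le_rpow_of_exponent_ge hc0 hc1.le hnt
    have h2 : (c : ℝ) ^ (n : ℝ) = c ^ n := by
      rw [Real.rpow_natCast]
    have h3 : c ^ n * ‖v‖ ≤ (1 / c) * ‖Φ (t + t₀) t₀ x v‖ := by
      rw [← mul_le_mul_iff_right₀ hc0]
      calc c * (c ^ n * ‖v‖) = c ^ (n + 1) * ‖v‖ := by ring
        _ ≤ ‖Φ (t + t₀) t₀ x v‖ := hkey
        _ = c * (1 / c * ‖Φ (t + t₀) t₀ x v‖) := by field_simp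
    calc c ^ t * ‖v‖ ≤ c ^ (n : ℝ) * ‖v‖ :=
          mul_le_mul_of_nonneg_right h1 (norm_nonneg v)
      _ = c ^ n * ‖v‖ := by rw [h2]
      _ ≤ (1 / c) * ‖Φ (t + t₀) t₀ x v‖ := h3
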